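/- Let k be a commutative ring, T a set, and S ⊆ T. Then the universal S-inverting algebra k⟨T⟩[S⁻¹] ≅ k⟨T, S⁻¹⟩ of the free algebra k⟨T⟩ admits a free resolution of length two as a left k⟨T⟩-module: there is a short exact sequence 0 → k⟨T⟩ ⊗ ⟨T⟩ ⊗ k⟨T⟩[S⁻¹] → k⟨T⟩ ⊗ k⟨T⟩[S⁻¹] → k⟨T⟩[S⁻¹] → 0 of left k⟨T⟩-modules, where ⟨T⟩ is the free k-module on T, the second map is induced by multiplication, and the first sends t ∈ T to t ⊗ 1 − 1 ⊗ t. In particular Tor_i^{k⟨T⟩}(M, k⟨T⟩[S⁻¹]) = 0 for all i ≥ 2 and all right k⟨T⟩-modules M. -/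

import Mathlib

/-!
STATEMENT 10: let `k` be a commutative ring, `T` a set, `S ⊆ T`, and let
`L = k⟨T⟩[S⁻¹] = k⟨T,S⁻¹⟩` be the universal `S`-inverting algebra of the free
algebra `B = k⟨T⟩` (characterised by its universal property).  Then `L` admits a
free resolution of length two as a left `B`-module:
`0 → B ⊗ ⟨T⟩ ⊗ L → B ⊗ L → L → 0`,
where `⟨T⟩` is the free `k`-module on `T`, tensor products are over `k`, the second
map is induced by multiplication and the first sends `b ⊗ t ⊗ l` to
`(b·t) ⊗ l − b ⊗ (t·l)`.  (In particular `L` has projective dimension ≤ 1 over `B`,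
so `Tor_i^B(M, L) = 0` for `i ≥ 2` and all right `B`-modules `M`.)
-/

open TensorProduct



namespace St10

variable {k : Type} [CommRing k] {T : Type} {S : Set T}

def rel (T : Type) (S : Set T) : FreeMonoid (T ⊕ S) → FreeMonoid (T ⊕ S) → Prop :=
  fun a b => b = 1 ∧ ∃ s : S,
    a = FreeMonoid.of (Sum.inl s.1) * FreeMonoid.of (Sum.inr s) ∨
    a = FreeMonoid.of (Sum.inr s) * FreeMonoid.of (Sum.inl s.1)

def con (T : Type) (S : Set T) : Con (FreeMonoid (T ⊕ S)) := conGen (rel T S)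

abbrev Mq (T : Type) (S : Set T) := (con T S).Quotient

def e (S : Set T) (t : T) : Mq T S := (con T S).mk' (FreeMonoid.of (Sum.inl t))

def einv (s : S) : Mq T S := (con T S).mk' (FreeMonoid.of (Sum.inr s))

lemma e_mul_einv (s : S) : e S s.1 * einv s = 1 := by
  rw [e, einv, ← map_mul, ← map_one ((con T S).mk')]
  exact (Con.eq _).2 (ConGen.Rel.of _ _ ⟨rfl, s, Or.inl rfl⟩)

lemma einv_mul_e (s : S) : einv s * e S s.1 = 1 := by
  rw [e, einv, ← map_mul, ← map_one ((con T S).mk')]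
  exact (Con.eq _).2 (ConGen.Rel.of _ _ ⟨rfl, s, Or.inr rfl⟩)

section mlift

variable {N : Type} [Monoid N] (φ : T → N) (hφ : ∀ s : S, IsUnit (φ s.1))

noncomputable def mlift : Mq T S →* N :=
  Con.lift _ (FreeMonoid.lift (Sum.elim φ fun s => ↑(hφ s).unit⁻¹))
    (Con.conGen_le.2 (by
      rintro a b ⟨rfl, s, h | h⟩ <;> subst h <;>
        simp [Con.ker_rel, IsUnit.unit_spec]))

lemma mlift_e (t : T) : mlift φ hφ (e S t) = φ t := by
  unfold mlift e
  exact (Con.lift_mk' _ _).trans (by simp)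

end mlift

/-- the universal S-inverting algebra, concretely -/
abbrev Cg (k : Type) [CommRing k] (T : Type) (S : Set T) := MonoidAlgebra k (Mq T S)

noncomputable def gHom (k : Type) [CommRing k] (T : Type) (S : Set T) :
    FreeAlgebra k T →ₐ[k] Cg k T S :=
  FreeAlgebra.lift k fun t => MonoidAlgebra.of k (Mq T S) (e S t)

lemma gHom_ι (t : T) : gHom k T S (FreeAlgebra.ι k t) = MonoidAlgebra.of k (Mq T S) (e S t) :=
  FreeAlgebra.lift_ι_apply _ _

lemma gHom_inv : ∀ s ∈ S, IsUnit (gHom k T S (FreeAlgebra.ι k s)) := by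
  intro s hs
  refine ⟨⟨gHom k T S (FreeAlgebra.ι k s),
    MonoidAlgebra.of k (Mq T S) (einv ⟨s, hs⟩), ?_, ?_⟩, rfl⟩
  · rw [gHom_ι, ← map_mul, e_mul_einv ⟨s, hs⟩, map_one]
  · rw [gHom_ι, ← map_mul, einv_mul_e ⟨s, hs⟩, map_one]

section univ

variable {A : Type} [Ring A] [Algebra k A]

lemma Cg_unique (h₁ h₂ : Cg k T S →ₐ[k] A)
    (H : h₁.comp (gHom k T S) = h₂.comp (gHom k T S)) : h₁ = h₂ := by
  have gen : ∀ x : T ⊕ S,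
      h₁ (MonoidAlgebra.of k (Mq T S) ((con T S).mk' (FreeMonoid.of x))) =
      h₂ (MonoidAlgebra.of k (Mq T S) ((con T S).mk' (FreeMonoid.of x))) := by
    have inl : ∀ t : T,
        h₁ (MonoidAlgebra.of k (Mq T S) (e S t)) =
        h₂ (MonoidAlgebra.of k (Mq T S) (e S t)) := by
      intro t
      have := congrArg (fun φ : FreeAlgebra k T →ₐ[k] A => φ (FreeAlgebra.ι k t)) H
      simpa [gHom_ι] using this
    rintro (t | s)
    · exact inl t
    · set a := MonoidAlgebra.of k (Mq T S) (e S s.1) with ha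
      set b := MonoidAlgebra.of k (Mq T S) (einv s) with hb
      have hab : a * b = 1 := by rw [ha, hb, ← map_mul, e_mul_einv, map_one]
      have hba : b * a = 1 := by rw [ha, hb, ← map_mul, einv_mul_e, map_one]
      show h₁ b = h₂ b
      calc h₁ b = h₁ b * (h₂ a * h₂ b) := by rw [← map_mul, hab, map_one, mul_one]
        _ = (h₁ b * h₁ a) * h₂ b := by rw [← inl s.1, ← mul_assoc]
        _ = h₂ b := by rw [← map_mul, hba, map_one, one_mul]
  apply MonoidAlgebra.algHom_ext
  intro m
  obtain ⟨w, rfl⟩ := Con.mk'_surjective m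
  induction w using FreeMonoid.inductionOn' with
  | one => rw [map_one ((con T S).mk'), ← MonoidAlgebra.one_def, map_one, map_one]
  | of_mul x w ih =>
      have hs : (MonoidAlgebra.single ((con T S).mk' (FreeMonoid.of x) * (con T S).mk' w) (1:k)) =
          MonoidAlgebra.single ((con T S).mk' (FreeMonoid.of x)) 1 *
            MonoidAlgebra.single ((con T S).mk' w) 1 := by
        rw [MonoidAlgebra.single_mul_single, one_mul]
      rw [map_mul ((con T S).mk'), hs, map_mul, map_mul, ih]
      have := gen x
      rw [MonoidAlgebra.of_apply] at this
      rw [this]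
  exact Subsingleton.elim _ _

theorem Cg_univ (g' : FreeAlgebra k T →ₐ[k] A)
    (hg' : ∀ s ∈ S, IsUnit (g' (FreeAlgebra.ι k s))) :
    ∃! h : Cg k T S →ₐ[k] A, h.comp (gHom k T S) = g' := by
  have hφ : ∀ s : S, IsUnit (g' (FreeAlgebra.ι k s.1)) := fun s => hg' s.1 s.2
  refine ⟨MonoidAlgebra.lift k A (Mq T S)
    (mlift (fun t => g' (FreeAlgebra.ι k t)) hφ), ?_, ?_⟩
  · apply FreeAlgebra.hom_ext
    funext t
    simp [gHom_ι, MonoidAlgebra.lift_of, mlift_e]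
  · intro h hh
    apply Cg_unique
    rw [hh]
    apply FreeAlgebra.hom_ext
    funext t
    simp [gHom_ι, MonoidAlgebra.lift_of, mlift_e]

end univ

end St10

namespace St10
theorem free_of_univ (k : Type) [CommRing k] (T : Type) (S : Set T)
    (L : Type) [Ring L] [Algebra k L]
    (f : FreeAlgebra k T →ₐ[k] L)
    (hinv : ∀ s ∈ S, IsUnit (f (FreeAlgebra.ι k s)))
    (huniv : ∀ (C : Type) [Ring C] [Algebra k C] (g : FreeAlgebra k T →ₐ[k] C),
        (∀ s ∈ S, IsUnit (g (FreeAlgebra.ι k s))) → ∃! h : L →ₐ[k] C, h.comp f = g) :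
    Module.Free k L := by
  obtain ⟨α, hα, -⟩ := huniv (Cg k T S) (gHom k T S) gHom_inv
  obtain ⟨β, hβ, -⟩ := Cg_univ f hinv
  have hba : β.comp α = AlgHom.id k L := by
    obtain ⟨γ, -, uγ⟩ := huniv L f hinv
    have e1 : (β.comp α).comp f = f := by rw [AlgHom.comp_assoc, hα, hβ]
    have e2 : (AlgHom.id k L).comp f = f := by simp
    rw [uγ (β.comp α) e1, uγ (AlgHom.id k L) e2]
  have hab : α.comp β = AlgHom.id k (Cg k T S) := by
    obtain ⟨δ', -, uδ⟩ := Cg_univ (gHom k T S) gHom_inv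
    have e1 : (α.comp β).comp (gHom k T S) = gHom k T S := by
      rw [AlgHom.comp_assoc, hβ, hα]
    have e2 : (AlgHom.id k (Cg k T S)).comp (gHom k T S) = gHom k T S := by simp
    rw [uδ (α.comp β) e1, uδ (AlgHom.id k (Cg k T S)) e2]
  haveI : Module.Free k (Cg k T S) := inferInstance
  exact Module.Free.of_equiv (LinearEquiv.ofLinear β.toLinearMap α.toLinearMap
    (congrArg AlgHom.toLinearMap hba) (congrArg AlgHom.toLinearMap hab))
end St10


namespace St10

variable {k T L : Type} [CommRing k] [Ring L] [Algebra k L]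

/-- auxiliary square-zero extension used to define the canonical homotopy -/
structure Aux (k T L : Type) [CommRing k] [Ring L] [Algebra k L]
    (f : FreeAlgebra k T →ₐ[k] L) where
  a : FreeAlgebra k T
  d : L →ₗ[k] FreeAlgebra k T ⊗[k] ((T →₀ k) ⊗[k] L)

namespace Aux

variable (f : FreeAlgebra k T →ₐ[k] L)

lemma ext' {x y : Aux k T L f} (h1 : x.a = y.a) (h2 : x.d = y.d) : x = y := by
  cases x; cases y; simp_all

noncomputable instance : Zero (Aux k T L f) := ⟨⟨0, 0⟩⟩
noncomputable instance : Add (Aux k T L f) := ⟨fun x y => ⟨x.a + y.a, x.d + y.d⟩⟩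
noncomputable instance : One (Aux k T L f) :=
  ⟨⟨1, (0 : L →ₗ[k] FreeAlgebra k T ⊗[k] ((T →₀ k) ⊗[k] L))⟩⟩
noncomputable instance : Mul (Aux k T L f) :=
  ⟨fun x y => ⟨x.a * y.a, x.a • y.d + x.d.comp (LinearMap.mulLeft k (f y.a))⟩⟩

noncomputable instance : AddCommMonoid (Aux k T L f) where
  nsmul := nsmulRec
  add_assoc x y z := ext' f (add_assoc _ _ _) (add_assoc _ _ _)
  zero_add x := ext' f (zero_add _) (zero_add _)
  add_zero x := ext' f (add_zero _) (add_zero _)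
  add_comm x y := ext' f (add_comm _ _) (add_comm _ _)

@[simp] lemma add_a (x y : Aux k T L f) : (x + y).a = x.a + y.a := rfl
@[simp] lemma add_d (x y : Aux k T L f) : (x + y).d = x.d + y.d := rfl
@[simp] lemma zero_a : (0 : Aux k T L f).a = 0 := rfl
@[simp] lemma zero_d : (0 : Aux k T L f).d = 0 := rfl

noncomputable instance : Semiring (Aux k T L f) :=
  { (inferInstance : AddCommMonoid (Aux k T L f)) with
    npow := npowRec
    mul_assoc := fun x y z => by
      refine ext' f (mul_assoc _ _ _) ?_
      show (x.a * y.a) • z.d + (x.a • y.d + x.d.comp (LinearMap.mulLeft k (f y.a))).comp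
            (LinearMap.mulLeft k (f z.a)) =
          x.a • (y.a • z.d + y.d.comp (LinearMap.mulLeft k (f z.a))) +
            x.d.comp (LinearMap.mulLeft k (f (y.a * z.a)))
      ext l
      simp [mul_smul, map_mul, mul_assoc, add_assoc]
    one_mul := fun x => by
      refine ext' f (one_mul _) ?_
      show (1 : FreeAlgebra k T) • x.d +
          (0 : L →ₗ[k] FreeAlgebra k T ⊗[k] ((T →₀ k) ⊗[k] L)).comp
            (LinearMap.mulLeft k (f x.a)) = x.d
      simp
    mul_one := fun x => by
      refine ext' f (mul_one _) ?_
      show x.a • (0 : L →ₗ[k] FreeAlgebra k T ⊗[k] ((T →₀ k) ⊗[k] L)) +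
          x.d.comp (LinearMap.mulLeft k (f 1)) = x.d
      simp [LinearMap.mulLeft_one]
    left_distrib := fun x y z => by
      refine ext' f (mul_add _ _ _) ?_
      show x.a • (y.d + z.d) + x.d.comp (LinearMap.mulLeft k (f (y.a + z.a))) =
        (x.a • y.d + x.d.comp (LinearMap.mulLeft k (f y.a))) +
          (x.a • z.d + x.d.comp (LinearMap.mulLeft k (f z.a)))
      ext l
      simp only [LinearMap.add_apply, LinearMap.smul_apply, LinearMap.comp_apply,
        LinearMap.mulLeft_apply, map_add, smul_add, add_mul]
      abel
    right_distrib := fun x y z => by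
      refine ext' f (add_mul _ _ _) ?_
      show (x.a + y.a) • z.d + (x.d + y.d).comp (LinearMap.mulLeft k (f z.a)) =
        (x.a • z.d + x.d.comp (LinearMap.mulLeft k (f z.a))) +
          (y.a • z.d + y.d.comp (LinearMap.mulLeft k (f z.a)))
      ext l
      simp only [LinearMap.add_apply, LinearMap.smul_apply, LinearMap.comp_apply,
        LinearMap.mulLeft_apply, add_smul]
      abel
    zero_mul := fun x => by
      refine ext' f (zero_mul _) ?_
      show (0 : FreeAlgebra k T) • x.d +
          (0 : L →ₗ[k] FreeAlgebra k T ⊗[k] ((T →₀ k) ⊗[k] L)).comp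
            (LinearMap.mulLeft k (f x.a)) = 0
      simp
    mul_zero := fun x => by
      refine ext' f (mul_zero _) ?_
      show x.a • (0 : L →ₗ[k] FreeAlgebra k T ⊗[k] ((T →₀ k) ⊗[k] L)) +
          x.d.comp (LinearMap.mulLeft k (f 0)) = 0
      ext l
      simp }

@[simp] lemma mul_a (x y : Aux k T L f) : (x * y).a = x.a * y.a := rfl
@[simp] lemma mul_d (x y : Aux k T L f) :
    (x * y).d = x.a • y.d + x.d.comp (LinearMap.mulLeft k (f y.a)) := rfl
@[simp] lemma one_a : (1 : Aux k T L f).a = 1 := rfl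
@[simp] lemma one_d : (1 : Aux k T L f).d = 0 := rfl

noncomputable instance : Algebra k (Aux k T L f) :=
  RingHom.toAlgebra'
    { toFun := fun c => ⟨algebraMap k (FreeAlgebra k T) c,
        (0 : L →ₗ[k] FreeAlgebra k T ⊗[k] ((T →₀ k) ⊗[k] L))⟩
      map_one' := ext' f (map_one _) rfl
      map_mul' := fun c c' => by
        refine ext' f (map_mul _ _ _) ?_
        show (0 : L →ₗ[k] FreeAlgebra k T ⊗[k] ((T →₀ k) ⊗[k] L)) =
          algebraMap k (FreeAlgebra k T) c •
              (0 : L →ₗ[k] FreeAlgebra k T ⊗[k] ((T →₀ k) ⊗[k] L)) +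
            (0 : L →ₗ[k] FreeAlgebra k T ⊗[k] ((T →₀ k) ⊗[k] L)).comp
              (LinearMap.mulLeft k (f (algebraMap k (FreeAlgebra k T) c')))
        simp
      map_zero' := ext' f (map_zero _) rfl
      map_add' := fun c c' => by
        refine ext' f (map_add _ _ _) ?_
        show (0 : L →ₗ[k] FreeAlgebra k T ⊗[k] ((T →₀ k) ⊗[k] L)) =
          (0 : L →ₗ[k] FreeAlgebra k T ⊗[k] ((T →₀ k) ⊗[k] L)) + 0
        simp }
    (by
      intro c x
      refine ext' f (by simp [Algebra.commutes]) ?_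
      show algebraMap k (FreeAlgebra k T) c • x.d +
          (0 : L →ₗ[k] FreeAlgebra k T ⊗[k] ((T →₀ k) ⊗[k] L)).comp
            (LinearMap.mulLeft k (f x.a)) =
        x.a • (0 : L →ₗ[k] FreeAlgebra k T ⊗[k] ((T →₀ k) ⊗[k] L)) +
          x.d.comp (LinearMap.mulLeft k (f (algebraMap k (FreeAlgebra k T) c)))
      ext l
      simp only [LinearMap.add_apply, LinearMap.smul_apply, LinearMap.comp_apply,
        LinearMap.mulLeft_apply, LinearMap.zero_apply, add_zero, zero_add, smul_zero,
        AlgHom.commutes]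
      rw [algebraMap_smul, ← map_smul x.d c l, Algebra.smul_def])

lemma algebraMap_a (c : k) :
    (algebraMap k (Aux k T L f) c).a = algebraMap k (FreeAlgebra k T) c := rfl
lemma algebraMap_d (c : k) : (algebraMap k (Aux k T L f) c).d = 0 := rfl

lemma smul_d (c : k) (x : Aux k T L f) : (c • x).d = c • x.d := by
  have h : c • x = algebraMap k (Aux k T L f) c * x := Algebra.smul_def c x
  rw [h]
  show algebraMap k (FreeAlgebra k T) c • x.d +
      (0 : L →ₗ[k] FreeAlgebra k T ⊗[k] ((T →₀ k) ⊗[k] L)).comp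
        (LinearMap.mulLeft k (f x.a)) = c • x.d
  ext l
  simp [algebraMap_smul]

end Aux

section Dh

variable (f : FreeAlgebra k T →ₐ[k] L)

/-- `l ↦ 1 ⊗ t ⊗ l` -/
noncomputable def δ (t : T) : L →ₗ[k] FreeAlgebra k T ⊗[k] ((T →₀ k) ⊗[k] L) :=
  (TensorProduct.mk k (FreeAlgebra k T) ((T →₀ k) ⊗[k] L) 1).comp
    (TensorProduct.mk k (T →₀ k) L (Finsupp.single t 1))

@[simp] lemma δ_apply (t : T) (l : L) :
    δ (k := k) (T := T) (L := L) t l = 1 ⊗ₜ (Finsupp.single t 1 ⊗ₜ l) := rfl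

noncomputable def Φ : FreeAlgebra k T →ₐ[k] Aux k T L f :=
  FreeAlgebra.lift k fun t => ⟨FreeAlgebra.ι k t, δ t⟩

def fstHom : Aux k T L f →ₐ[k] FreeAlgebra k T where
  toFun := Aux.a
  map_one' := rfl
  map_mul' := fun _ _ => rfl
  map_zero' := rfl
  map_add' := fun _ _ => rfl
  commutes' := fun _ => rfl

lemma fst_Φ (b : FreeAlgebra k T) : (Φ f b).a = b := by
  have h : (fstHom f).comp (Φ f) = AlgHom.id k (FreeAlgebra k T) := by
    apply FreeAlgebra.hom_ext
    funext t
    show (fstHom f) (Φ f (FreeAlgebra.ι k t)) = FreeAlgebra.ι k t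
    rw [Φ, FreeAlgebra.lift_ι_apply]
    rfl
  exact congrArg (fun φ : FreeAlgebra k T →ₐ[k] FreeAlgebra k T => φ b) h

/-- the universal derivation, twisted by `f` on the right -/
noncomputable def Dh : FreeAlgebra k T →ₗ[k]
    (L →ₗ[k] FreeAlgebra k T ⊗[k] ((T →₀ k) ⊗[k] L)) where
  toFun b := (Φ f b).d
  map_add' x y := by
    show (Φ f (x + y)).d = (Φ f x).d + (Φ f y).d
    rw [map_add]; rfl
  map_smul' c x := by
    show (Φ f (c • x)).d = c • (Φ f x).d
    rw [map_smul]
    exact Aux.smul_d f c _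

lemma Dh_mul (x y : FreeAlgebra k T) :
    Dh f (x * y) = x • Dh f y + (Dh f x).comp (LinearMap.mulLeft k (f y)) := by
  show (Φ f (x * y)).d = _
  rw [map_mul]
  show (Φ f x).a • (Φ f y).d + (Φ f x).d.comp (LinearMap.mulLeft k (f (Φ f y).a)) = _
  rw [fst_Φ, fst_Φ]
  rfl

lemma Dh_ι (t : T) : Dh f (FreeAlgebra.ι k t) = δ t := by
  show (Φ f (FreeAlgebra.ι k t)).d = δ t
  rw [Φ, FreeAlgebra.lift_ι_apply]

lemma Dh_algebraMap (c : k) : Dh f (algebraMap k (FreeAlgebra k T) c) = 0 := by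
  show (Φ f (algebraMap k (FreeAlgebra k T) c)).d = 0
  rw [AlgHom.commutes]
  rfl

end Dh

end St10

namespace St10

variable {k T L : Type} [CommRing k] [Ring L] [Algebra k L]
variable (f : FreeAlgebra k T →ₐ[k] L)

noncomputable def γ (t : T) : L →ₗ[k] FreeAlgebra k T ⊗[k] L :=
  (TensorProduct.mk k (FreeAlgebra k T) L (FreeAlgebra.ι k t)) -
    (TensorProduct.mk k (FreeAlgebra k T) L 1).comp (LinearMap.mulLeft k (f (FreeAlgebra.ι k t)))

@[simp] lemma γ_apply (t : T) (l : L) :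
    γ f t l = FreeAlgebra.ι k t ⊗ₜ l - 1 ⊗ₜ (f (FreeAlgebra.ι k t) * l) := rfl

noncomputable def gmap : (T →₀ k) ⊗[k] L →ₗ[k] FreeAlgebra k T ⊗[k] L :=
  TensorProduct.lift (Finsupp.lsum k fun t => LinearMap.toSpanSingleton k _ (γ f t))

lemma gmap_single (t : T) (c : k) (l : L) :
    gmap f (Finsupp.single t c ⊗ₜ l) = c • γ f t l := by
  simp [gmap, LinearMap.toSpanSingleton_apply]

noncomputable def d1 : (FreeAlgebra k T ⊗[k] ((T →₀ k) ⊗[k] L)) →ₗ[FreeAlgebra k T]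
    FreeAlgebra k T ⊗[k] L :=
  TensorProduct.AlgebraTensorModule.lift
    (LinearMap.toSpanSingleton (FreeAlgebra k T) _ (gmap f))

lemma d1_tmul (b : FreeAlgebra k T) (x : (T →₀ k) ⊗[k] L) :
    d1 f (b ⊗ₜ x) = b • gmap f x := by
  rw [d1, TensorProduct.AlgebraTensorModule.lift_tmul]
  rfl

lemma d1_single (b : FreeAlgebra k T) (t : T) (l : L) :
    d1 f (b ⊗ₜ (Finsupp.single t 1 ⊗ₜ l)) =
      (b * FreeAlgebra.ι k t) ⊗ₜ l - b ⊗ₜ (f (FreeAlgebra.ι k t) * l) := by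
  rw [d1_tmul, gmap_single, one_smul, γ_apply, smul_sub, TensorProduct.smul_tmul',
    TensorProduct.smul_tmul', smul_eq_mul, smul_eq_mul, mul_one]

/-- the homotopy -/
noncomputable def hmt : FreeAlgebra k T ⊗[k] L →ₗ[k]
    FreeAlgebra k T ⊗[k] ((T →₀ k) ⊗[k] L) :=
  TensorProduct.lift (Dh f)

lemma hmt_tmul (b : FreeAlgebra k T) (l : L) : hmt f (b ⊗ₜ l) = Dh f b l := rfl

lemma d1_Dh (b : FreeAlgebra k T) (l : L) :
    d1 f (Dh f b l) = b ⊗ₜ l - 1 ⊗ₜ (f b * l) := by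
  refine FreeAlgebra.induction k T
    (motive := fun b => ∀ l : L, d1 f (Dh f b l) = b ⊗ₜ l - 1 ⊗ₜ (f b * l)) ?_ ?_ ?_ ?_ b l
  · intro c l
    rw [Dh_algebraMap]
    have h : (algebraMap k (FreeAlgebra k T) c) ⊗ₜ[k] l =
        (1 : FreeAlgebra k T) ⊗ₜ[k] (f (algebraMap k (FreeAlgebra k T) c) * l) := by
      rw [AlgHom.commutes, Algebra.algebraMap_eq_smul_one, TensorProduct.smul_tmul,
        ← Algebra.smul_def]
    rw [LinearMap.zero_apply, map_zero, h, sub_self]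
  · intro t l
    rw [Dh_ι, δ_apply, d1_single, one_mul]
  · intro x y hx hy l
    rw [Dh_mul, LinearMap.add_apply, LinearMap.smul_apply, LinearMap.comp_apply,
      LinearMap.mulLeft_apply, map_add, map_smul, hx, hy, smul_sub,
      TensorProduct.smul_tmul', TensorProduct.smul_tmul', smul_eq_mul, smul_eq_mul,
      mul_one, map_mul, mul_assoc]
    abel
  · intro x y hx hy l
    rw [map_add, LinearMap.add_apply, map_add, hx, hy, map_add, add_mul,
      TensorProduct.add_tmul, TensorProduct.tmul_add]
    abel

lemma hmt_sub (x y : FreeAlgebra k T ⊗[k] L) :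
    hmt f (x - y) = hmt f x + (-1 : k) • hmt f y := by
  rw [sub_eq_add_neg, ← neg_one_smul k y, map_add, map_smul]

lemma add_neg_one_smul_cancel (c : FreeAlgebra k T ⊗[k] ((T →₀ k) ⊗[k] L)) :
    c + (-1 : k) • c = 0 := by
  nth_rewrite 1 [← one_smul k c]
  rw [← add_smul]
  norm_num

lemma hmt_d1_single (b : FreeAlgebra k T) (t : T) (l : L) :
    hmt f (d1 f (b ⊗ₜ (Finsupp.single t 1 ⊗ₜ l))) = b ⊗ₜ (Finsupp.single t 1 ⊗ₜ l) := by
  rw [d1_single, hmt_sub, hmt_tmul, hmt_tmul, Dh_mul, LinearMap.add_apply,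
    LinearMap.smul_apply, LinearMap.comp_apply, LinearMap.mulLeft_apply, Dh_ι, δ_apply,
    add_assoc, add_neg_one_smul_cancel, add_zero, TensorProduct.smul_tmul', smul_eq_mul,
    mul_one]

lemma hmt_d1 (x : FreeAlgebra k T ⊗[k] ((T →₀ k) ⊗[k] L)) : hmt f (d1 f x) = x := by
  have h : (hmt f).comp ((d1 f).restrictScalars k) = LinearMap.id := by
    apply TensorProduct.ext'
    intro b x
    induction x using TensorProduct.induction_on with
    | zero => simp
    | tmul v l =>
        induction v using Finsupp.induction_linear with
        | zero => simp
        | add v w hv hw =>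
            rw [TensorProduct.add_tmul, TensorProduct.tmul_add, map_add, map_add, hv, hw]
        | single t c =>
            have hc : (Finsupp.single t c : T →₀ k) = c • Finsupp.single t (1 : k) := by
              rw [Finsupp.smul_single, smul_eq_mul, mul_one]
            rw [hc, ← TensorProduct.smul_tmul', TensorProduct.tmul_smul, map_smul, map_smul]
            congr 1
            rw [LinearMap.comp_apply, LinearMap.restrictScalars_apply, hmt_d1_single,
              LinearMap.id_apply]
    | add x y hx hy =>
        rw [TensorProduct.tmul_add, map_add, map_add, hx, hy]
  exact DFunLike.congr_fun h x

end St10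



theorem statement10 (k : Type) [CommRing k] (T : Type) (S : Set T)
    (L : Type) [Ring L] [Algebra k L]
    -- f : k⟨T⟩ → L is the universal S-inverting k-algebra homomorphism:
    (f : FreeAlgebra k T →ₐ[k] L)
    (hinv : ∀ s ∈ S, IsUnit (f (FreeAlgebra.ι k s)))
    (huniv : ∀ (C : Type) [Ring C] [Algebra k C] (g : FreeAlgebra k T →ₐ[k] C),
        (∀ s ∈ S, IsUnit (g (FreeAlgebra.ι k s))) → ∃! h : L →ₐ[k] C, h.comp f = g)
    -- L is a left k⟨T⟩-module via f:
    [Module (FreeAlgebra k T) L]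
    (hsmul : ∀ (b : FreeAlgebra k T) (l : L), b • l = f b * l) :
    ∃ (d1 : (FreeAlgebra k T ⊗[k] ((T →₀ k) ⊗[k] L)) →ₗ[FreeAlgebra k T]
              (FreeAlgebra k T ⊗[k] L))
      (d0 : (FreeAlgebra k T ⊗[k] L) →ₗ[FreeAlgebra k T] L),
      -- the maps of the resolution:
      (∀ (b : FreeAlgebra k T) (t : T) (l : L),
          d1 (b ⊗ₜ (Finsupp.single t 1 ⊗ₜ l)) =
            (b * FreeAlgebra.ι k t) ⊗ₜ l - b ⊗ₜ (f (FreeAlgebra.ι k t) * l)) ∧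
      (∀ (b : FreeAlgebra k T) (l : L), d0 (b ⊗ₜ l) = f b * l) ∧
      -- the sequence 0 → B ⊗ ⟨T⟩ ⊗ L → B ⊗ L → L → 0 is exact:
      Function.Injective d1 ∧
      LinearMap.range d1 = LinearMap.ker d0 ∧
      Function.Surjective d0 ∧
      -- and the first two terms are free left B-modules:
      Module.Free (FreeAlgebra k T) (FreeAlgebra k T ⊗[k] ((T →₀ k) ⊗[k] L)) ∧
      Module.Free (FreeAlgebra k T) (FreeAlgebra k T ⊗[k] L) := by
  haveI tower : IsScalarTower k (FreeAlgebra k T) L := ⟨fun c b l => by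
    rw [hsmul, hsmul, map_smul, Algebra.smul_def, Algebra.smul_def, mul_assoc]⟩
  haveI scc : SMulCommClass k (FreeAlgebra k T) L := ⟨fun c b l => by
    rw [hsmul, hsmul, Algebra.smul_def, Algebra.smul_def, ← mul_assoc, ← mul_assoc,
      Algebra.commutes]⟩
  set d0 : (FreeAlgebra k T ⊗[k] L) →ₗ[FreeAlgebra k T] L :=
    TensorProduct.AlgebraTensorModule.lift
      (LinearMap.toSpanSingleton (FreeAlgebra k T) (L →ₗ[k] L) LinearMap.id) with hd0def
  have d0_tmul : ∀ (b : FreeAlgebra k T) (l : L), d0 (b ⊗ₜ l) = f b * l := by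
    intro b l
    rw [hd0def, TensorProduct.AlgebraTensorModule.lift_tmul, LinearMap.toSpanSingleton_apply,
      LinearMap.smul_apply, LinearMap.id_apply, hsmul]
  -- identity (A): d1 ∘ hmt = id - (1 ⊗ₜ ·) ∘ d0
  have hA : ∀ y : FreeAlgebra k T ⊗[k] L,
      St10.d1 f (St10.hmt f y) = y - 1 ⊗ₜ (d0 y) := by
    have h : ((St10.d1 f).restrictScalars k).comp (St10.hmt f) =
        LinearMap.id - (TensorProduct.mk k (FreeAlgebra k T) L 1).comp
          (d0.restrictScalars k) := by
      apply TensorProduct.ext'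
      intro b l
      rw [LinearMap.comp_apply, LinearMap.restrictScalars_apply, St10.hmt_tmul,
        St10.d1_Dh, LinearMap.sub_apply, LinearMap.id_apply, LinearMap.comp_apply,
        LinearMap.restrictScalars_apply, d0_tmul]
      rfl
    intro y
    have := DFunLike.congr_fun h y
    simpa using this
  refine ⟨St10.d1 f, d0, fun b t l => St10.d1_single f b t l, d0_tmul, ?_, ?_, ?_, ?_, ?_⟩
  · -- injectivity
    intro x y hxy
    have := congrArg (St10.hmt f) hxy
    rwa [St10.hmt_d1, St10.hmt_d1] at this
  · -- exactness
    apply le_antisymm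
    · rintro y ⟨x, rfl⟩
      rw [LinearMap.mem_ker]
      have h1 := hA (St10.d1 f x)
      rw [St10.hmt_d1] at h1
      have h0 : (1 : FreeAlgebra k T) ⊗ₜ[k] (d0 (St10.d1 f x)) = 0 :=
        sub_eq_self.mp h1.symm
      have h2 := congrArg d0 h0
      rwa [d0_tmul, map_one, one_mul, map_zero] at h2
    · intro x hx
      rw [LinearMap.mem_ker] at hx
      refine ⟨St10.hmt f x, ?_⟩
      rw [hA, hx, TensorProduct.tmul_zero, sub_zero]
  · -- surjectivity
    intro l
    exact ⟨1 ⊗ₜ l, by rw [d0_tmul, map_one, one_mul]⟩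
  · -- freeness of the degree-1 term
    haveI hfree : Module.Free k L := St10.free_of_univ k T S L f hinv huniv
    exact Module.Free.of_basis (Algebra.TensorProduct.basis (FreeAlgebra k T)
      (Module.Basis.tensorProduct (Module.Free.chooseBasis k (T →₀ k))
        (Module.Free.chooseBasis k L)))
  · -- freeness of the degree-0 term
    haveI hfree : Module.Free k L := St10.free_of_univ k T S L f hinv huniv
    exact Module.Free.of_basis (Algebra.TensorProduct.basis (FreeAlgebra k T)
      (Module.Free.chooseBasis k L))
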